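/- Let κ be a regular uncountable cardinal. Then the complete bipartite graph K_{2^κ, 2^κ} has chromatic number at most 2 (Chr(K_{2^κ,2^κ}, 2) holds), but the stationary list colorability SList(K_{2^κ,2^κ}, κ) fails: there is a list function assigning to each vertex a stationary subset of κ such that no choice function is a good coloring. -/

import Mathlib

open Cardinal Set

/-- C is a club (closed unbounded) subset of the ordinal o. -/
def IsClubIn (C : Set Ordinal) (o : Ordinal) : Prop :=
  C ⊆ Set.Iio o ∧ (∀ a < o, ∃ b ∈ C, a ≤ b ∧ b < o) ∧
  ∀ a < o, 0 < a → (∀ b < a, ∃ x ∈ C, b < x ∧ x < a) → a ∈ C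

/-- S is a stationary subset of the ordinal o. -/
def IsStationaryIn (S : Set Ordinal) (o : Ordinal) : Prop :=
  S ⊆ Set.Iio o ∧ ∀ C, IsClubIn C o → (S ∩ C).Nonempty

lemma isClubIn_unbounded' {C : Set Ordinal} {o : Ordinal} (hC : IsClubIn C o)
    (ho : Order.IsSuccLimit o) : ∀ x < o, ∃ y ∈ C, x < y ∧ y < o := by
  intro x hx
  obtain ⟨y, hyC, hxy, hyo⟩ := hC.2.1 (x + 1) (ho.succ_lt hx)
  exact ⟨y, hyC, lt_of_lt_of_le (Order.lt_succ x) hxy, hyo⟩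

lemma clubs_intersect {o : Ordinal} (ho : ℵ₀ < o.cof) {C D : Set Ordinal}
    (hC : IsClubIn C o) (hD : IsClubIn D o) : (C ∩ D).Nonempty := by
  have holim : Order.IsSuccLimit o := Ordinal.aleph0_le_cof.1 ho.le
  have hC' := isClubIn_unbounded' hC holim
  have hD' := isClubIn_unbounded' hD holim
  choose fc hfc1 hfc2 hfc3 using hC'
  choose fd hfd1 hfd2 hfd3 using hD'
  let T := {p : Ordinal × Ordinal // p.1 ∈ C ∧ p.2 ∈ D ∧ p.1 < p.2 ∧ p.2 < o}
  have h0 : (0 : Ordinal) < o := holim.pos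
  let step : T → T := fun p =>
    ⟨(fc p.1.2 p.2.2.2.2, fd (fc p.1.2 p.2.2.2.2) (hfc3 _ p.2.2.2.2)),
      hfc1 _ p.2.2.2.2, hfd1 _ _, hfd2 _ _, hfd3 _ _⟩
  let base : T := ⟨(fc 0 h0, fd (fc 0 h0) (hfc3 0 h0)),
      hfc1 0 h0, hfd1 _ _, hfd2 _ _, hfd3 _ _⟩
  let f : ℕ → T := fun n => Nat.rec base (fun _ p => step p) n
  have hfsucc : ∀ n, f (n + 1) = step (f n) := fun n => rfl
  have hchain : ∀ n, (f n).1.2 < (f (n + 1)).1.1 := by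
    intro n
    rw [hfsucc]
    exact hfc2 _ (f n).2.2.2.2
  set s : Ordinal := ⨆ n, (f n).1.1 with hs
  have hlt : ∀ n, (f n).1.1 < o := fun n => lt_trans (f n).2.2.2.1 (f n).2.2.2.2
  have hso : s < o := by
    rw [hs]
    refine Ordinal.iSup_lt_ord_lift ?_ hlt
    rw [Cardinal.mk_nat, Cardinal.lift_aleph0]; exact ho
  have hles : ∀ n, (f n).1.1 ≤ s := fun n => Ordinal.le_iSup (fun n => (f n).1.1) n
  have hmono : ∀ n, (f n).1.1 < (f (n + 1)).1.1 := fun n =>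
    lt_trans (f n).2.2.2.1 (hchain n)
  have hs0 : 0 < s := lt_of_le_of_lt zero_le (lt_of_lt_of_le (hmono 0) (hles 1))
  have hlim : ∀ b < s, ∃ n, b < (f n).1.1 := by
    intro b hb
    rw [hs, Ordinal.lt_iSup_iff] at hb
    exact hb
  have hsC : s ∈ C := by
    refine hC.2.2 s hso hs0 ?_
    intro b hb
    obtain ⟨n, hn⟩ := hlim b hb
    exact ⟨(f n).1.1, (f n).2.1, hn, lt_of_lt_of_le (hmono n) (hles (n + 1))⟩
  have hsD : s ∈ D := by
    refine hD.2.2 s hso hs0 ?_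
    intro b hb
    obtain ⟨n, hn⟩ := hlim b hb
    exact ⟨(f n).1.2, (f n).2.2.1, lt_trans hn (f n).2.2.2.1,
      lt_of_lt_of_le (hchain n) (hles (n + 1))⟩
  exact ⟨s, hsC, hsD⟩

lemma Iio_isStationaryIn {o : Ordinal} (ho : 0 < o) : IsStationaryIn (Set.Iio o) o := by
  refine ⟨subset_rfl, fun C hC => ?_⟩
  obtain ⟨b, hbC, _, hbo⟩ := hC.2.1 0 ho
  exact ⟨b, hbo, hbC⟩

/-- Chr(K_{2^κ,2^κ}, 2) holds but SList(K_{2^κ,2^κ}, κ) fails. -/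
theorem chr_holds_slist_fails {A B : Type} (κ : Cardinal)
    (hreg : κ.IsRegular) (hunc : ℵ₀ < κ)
    (hA : #A = 2 ^ κ) (hB : #B = 2 ^ κ) :
    (∃ c : A ⊕ B → Fin 2,
      ∀ v w, (completeBipartiteGraph A B).Adj v w → c v ≠ c w) ∧
    (∃ L : A ⊕ B → Set Ordinal, (∀ v, IsStationaryIn (L v) κ.ord) ∧
      ¬ ∃ c : A ⊕ B → Ordinal, (∀ v, c v ∈ L v) ∧
        ∀ v w, (completeBipartiteGraph A B).Adj v w → c v ≠ c w) := by
  classical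
  have hocof : ℵ₀ < κ.ord.cof := by rw [hreg.cof_eq]; exact hunc
  have hopos : 0 < κ.ord := by
    rw [Cardinal.lt_ord, Ordinal.card_zero]
    exact lt_trans Cardinal.aleph0_pos hunc
  constructor
  · refine ⟨Sum.elim (fun _ => 0) (fun _ => 1), ?_⟩
    rintro (a | b) (a' | b') hadj <;> simp_all [completeBipartiteGraph]
  · have hcardA : lift.{1} #A = lift.{0} #(Set (Set.Iio κ.ord)) := by
      rw [Cardinal.mk_set, Ordinal.mk_Iio_ordinal, Cardinal.card_ord, hA,
        Cardinal.lift_power, Cardinal.lift_two, Cardinal.lift_id']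
    have hcardB : lift.{1} #B = lift.{0} #(Set (Set.Iio κ.ord)) := by
      rw [Cardinal.mk_set, Ordinal.mk_Iio_ordinal, Cardinal.card_ord, hB,
        Cardinal.lift_power, Cardinal.lift_two, Cardinal.lift_id']
    obtain ⟨eA⟩ : Nonempty (A ≃ Set (Set.Iio κ.ord)) := Cardinal.lift_mk_eq'.1 hcardA
    obtain ⟨eB⟩ : Nonempty (B ≃ Set (Set.Iio κ.ord)) := Cardinal.lift_mk_eq'.1 hcardB
    set pick : Set (Set.Iio κ.ord) → Set Ordinal := fun T =>
      if IsStationaryIn (Subtype.val '' T) κ.ord then Subtype.val '' T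
      else Set.Iio κ.ord with hpick
    have hpickStat : ∀ T, IsStationaryIn (pick T) κ.ord := by
      intro T
      rw [hpick]
      dsimp only
      split
      · assumption
      · exact Iio_isStationaryIn hopos
    have hpickSurj : ∀ S : Set Ordinal, IsStationaryIn S κ.ord →
        ∃ T, pick T = S := by
      intro S hS
      refine ⟨{x : Set.Iio κ.ord | x.1 ∈ S}, ?_⟩
      have himg : Subtype.val '' {x : Set.Iio κ.ord | x.1 ∈ S} = S := by
        ext x
        constructor
        · rintro ⟨y, hy, rfl⟩; exact hy
        · intro hx; exact ⟨⟨x, hS.1 hx⟩, hx, rfl⟩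
      rw [hpick]
      dsimp only
      rw [himg, if_pos hS]
    refine ⟨Sum.elim (fun a => pick (eA a)) (fun b => pick (eB b)), ?_, ?_⟩
    · rintro (a | b)
      · exact hpickStat _
      · exact hpickStat _
    · rintro ⟨c, hmem, hcol⟩
      set X : Set Ordinal := Set.range (fun a => c (Sum.inl a)) with hX
      set Y : Set Ordinal := Set.range (fun b => c (Sum.inr b)) with hY
      have hdisj : X ∩ Y = ∅ := by
        ext x
        simp only [Set.mem_inter_iff, Set.mem_empty_iff_false, iff_false]
        rintro ⟨⟨a, rfl⟩, ⟨b, hb⟩⟩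
        exact hcol (Sum.inl a) (Sum.inr b) (by simp [completeBipartiteGraph]) hb.symm
      have hXsub : X ⊆ Set.Iio κ.ord := by
        rintro x ⟨a, rfl⟩
        exact (hpickStat (eA a)).1 (hmem (Sum.inl a))
      have hYsub : Y ⊆ Set.Iio κ.ord := by
        rintro x ⟨b, rfl⟩
        exact (hpickStat (eB b)).1 (hmem (Sum.inr b))
      have hgetclub : ∀ Z : Set Ordinal, Z ⊆ Set.Iio κ.ord →
          (∀ S : Set Ordinal, IsStationaryIn S κ.ord → (Z ∩ S).Nonempty) →
          ∃ Cl, IsClubIn Cl κ.ord ∧ Cl ⊆ Z := by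
        intro Z hZsub hZmeets
        by_cases hstat : IsStationaryIn (Set.Iio κ.ord \ Z) κ.ord
        · obtain ⟨x, hxZ, hxD⟩ := hZmeets _ hstat
          exact absurd hxZ hxD.2
        · rw [IsStationaryIn] at hstat
          push_neg at hstat
          obtain ⟨Cl, hCl, hClempty⟩ := hstat (Set.diff_subset)
          refine ⟨Cl, hCl, ?_⟩
          intro x hx
          by_contra hxZ
          have hmemx : x ∈ (Set.Iio κ.ord \ Z) ∩ Cl := ⟨⟨hCl.1 hx, hxZ⟩, hx⟩
          rw [hClempty] at hmemx
          exact hmemx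
      have hXmeets : ∀ S : Set Ordinal, IsStationaryIn S κ.ord → (X ∩ S).Nonempty := by
        intro S hS
        obtain ⟨T, hT⟩ := hpickSurj S hS
        refine ⟨c (Sum.inl (eA.symm T)), ⟨eA.symm T, rfl⟩, ?_⟩
        have := hmem (Sum.inl (eA.symm T))
        simp only [Sum.elim_inl, Equiv.apply_symm_apply] at this
        rwa [hT] at this
      have hYmeets : ∀ S : Set Ordinal, IsStationaryIn S κ.ord → (Y ∩ S).Nonempty := by
        intro S hS
        obtain ⟨T, hT⟩ := hpickSurj S hS
        refine ⟨c (Sum.inr (eB.symm T)), ⟨eB.symm T, rfl⟩, ?_⟩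
        have := hmem (Sum.inr (eB.symm T))
        simp only [Sum.elim_inr, Equiv.apply_symm_apply] at this
        rwa [hT] at this
      obtain ⟨C1, hC1, hC1X⟩ := hgetclub X hXsub hXmeets
      obtain ⟨C2, hC2, hC2Y⟩ := hgetclub Y hYsub hYmeets
      obtain ⟨x, hx1, hx2⟩ := clubs_intersect hocof hC1 hC2
      have : x ∈ X ∩ Y := ⟨hC1X hx1, hC2Y hx2⟩
      rw [hdisj] at this
      exact this
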